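/- Let Z be a nonempty compact subset of ℝ^{n+1}, μ₀ a Borel probability measure on Z, U and V nonempty compact metric spaces, L_F, L_ℓ ≥ 0, and let F : ℝ^{n+1} × U × V → ℝ^{n+1} and ℓ : ℝ^{n+1} × U × V → ℝ be bounded continuous with ‖F(w,u,v) − F(w',u,v)‖ ≤ L_F‖w − w'‖ and |ℓ(w,u,v) − ℓ(w',u,v)| ≤ L_ℓ‖w − w'‖ for all w, w' ∈ ℝ^{n+1}, u ∈ U, v ∈ V. Then for all continuous Φ₁, Φ₂ : Z → Z and every continuous p : Z → ℝ^{n+1}: |𝓗(μ₀,Φ₁,p) − 𝓗(μ₀,Φ₂,p)| ≤ ∫_Z (L_ℓ + L_F‖p(z)‖) · ‖Φ₁(z) − Φ₂(z)‖ dμ₀(z). -/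

import Mathlib

open MeasureTheory Set

noncomputable section

abbrev Euc (n : ℕ) : Type := EuclideanSpace ℝ (Fin (n + 1))

/-- Stability estimate for the Hamiltonian `𝓗(μ₀,Φ,p)` with respect to `Φ`. -/
theorem hamiltonian_stability
    (n : ℕ) (Zs : Set (Euc n)) (hZc : IsCompact Zs) (hZn : Zs.Nonempty)
    (μ₀ : Measure ↥Zs) [IsProbabilityMeasure μ₀]
    (U V : Type) [MetricSpace U] [CompactSpace U] [Nonempty U]
    [MetricSpace V] [CompactSpace V] [Nonempty V]
    (LF Ll : ℝ) (hLF : 0 ≤ LF) (hLl : 0 ≤ Ll)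
    (F : Euc n → U → V → Euc n) (l : Euc n → U → V → ℝ)
    (hFc : Continuous fun q : Euc n × U × V => F q.1 q.2.1 q.2.2)
    (hlc : Continuous fun q : Euc n × U × V => l q.1 q.2.1 q.2.2)
    (hFb : ∃ M : ℝ, ∀ w a b, ‖F w a b‖ ≤ M)
    (hlb : ∃ M : ℝ, ∀ w a b, |l w a b| ≤ M)
    (hFL : ∀ w w' a b, ‖F w a b - F w' a b‖ ≤ LF * ‖w - w'‖)
    (hlL : ∀ w w' a b, |l w a b - l w' a b| ≤ Ll * ‖w - w'‖)
    (Φ₁ Φ₂ : C(↥Zs, ↥Zs)) (p : C(↥Zs, Euc n)) :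
    |(⨅ u : U, ⨆ v : V,
        ∫ z, (l ((Φ₁ z : Euc n)) u v + (inner ℝ (F ((Φ₁ z : Euc n)) u v) (p z) : ℝ)) ∂μ₀) -
      (⨅ u : U, ⨆ v : V,
        ∫ z, (l ((Φ₂ z : Euc n)) u v + (inner ℝ (F ((Φ₂ z : Euc n)) u v) (p z) : ℝ)) ∂μ₀)| ≤
      ∫ z, (Ll + LF * ‖p z‖) * ‖(Φ₁ z : Euc n) - (Φ₂ z : Euc n)‖ ∂μ₀ := by
  haveI : CompactSpace ↥Zs := isCompact_iff_compactSpace.mp hZc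
  obtain ⟨MF, hMF⟩ := hFb
  obtain ⟨Ml, hMl⟩ := hlb
  obtain ⟨Cp, hCp⟩ := (isCompact_range (p.continuous.norm)).bddAbove
  have hCp' : ∀ z, ‖p z‖ ≤ Cp := fun z => hCp ⟨z, rfl⟩
  inhabit U; inhabit V
  have hMF0 : 0 ≤ MF := le_trans (norm_nonneg _) (hMF 0 default default)
  set f : C(↥Zs, ↥Zs) → U → V → (↥Zs → ℝ) := fun Φ u v z =>
    l ((Φ z : Euc n)) u v + (inner ℝ (F ((Φ z : Euc n)) u v) (p z) : ℝ) with hf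
  set g : C(↥Zs, ↥Zs) → U → V → ℝ := fun Φ u v => ∫ z, f Φ u v z ∂μ₀ with hg
  have hfc : ∀ (Φ : C(↥Zs, ↥Zs)) u v, Continuous (f Φ u v) := by
    intro Φ u v
    have h1 : Continuous fun z : ↥Zs => (Φ z : Euc n) :=
      continuous_subtype_val.comp Φ.continuous
    have hpair : Continuous fun z : ↥Zs => (((Φ z : Euc n), (u, v)) : Euc n × U × V) :=
      h1.prodMk (continuous_const : Continuous fun _ : ↥Zs => ((u, v) : U × V))
    have h2 : Continuous fun z : ↥Zs => F ((Φ z : Euc n)) u v := hFc.comp hpair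
    have h3 : Continuous fun z : ↥Zs => l ((Φ z : Euc n)) u v := hlc.comp hpair
    exact h3.add (h2.inner p.continuous)
  have hfi : ∀ (Φ : C(↥Zs, ↥Zs)) u v, Integrable (f Φ u v) μ₀ := fun Φ u v =>
    (hfc Φ u v).integrable_of_hasCompactSupport (HasCompactSupport.of_compactSpace _)
  -- uniform bound on g
  set M : ℝ := Ml + MF * Cp with hMdef
  have hM : ∀ (Φ : C(↥Zs, ↥Zs)) u v, |g Φ u v| ≤ M := by
    intro Φ u v
    rw [← Real.norm_eq_abs]
    refine le_trans (norm_integral_le_of_norm_le (integrable_const M)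
      (ae_of_all _ fun z => ?_)) (by simp)
    rw [Real.norm_eq_abs]
    calc |f Φ u v z| ≤ |l ((Φ z : Euc n)) u v| + |(inner ℝ (F ((Φ z : Euc n)) u v) (p z) : ℝ)| :=
          abs_add_le _ _
      _ ≤ Ml + MF * Cp := by
          gcongr
          · exact hMl _ _ _
          · exact le_trans (abs_real_inner_le_norm _ _)
              (mul_le_mul (hMF _ _ _) (hCp' z) (norm_nonneg _) hMF0)
  have hbddA : ∀ (Φ : C(↥Zs, ↥Zs)) u, BddAbove (Set.range (g Φ u)) :=
    fun Φ u => ⟨M, by rintro x ⟨v, rfl⟩; exact le_trans (le_abs_self _) (hM Φ u v)⟩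
  have hbddB : ∀ (Φ : C(↥Zs, ↥Zs)), BddBelow (Set.range fun u => ⨆ v, g Φ u v) := by
    intro Φ
    refine ⟨-M, ?_⟩
    rintro x ⟨u, rfl⟩
    exact le_trans (neg_le_of_abs_le (hM Φ u default)) (le_ciSup (hbddA Φ u) default)
  set D : ℝ := ∫ z, (Ll + LF * ‖p z‖) * ‖(Φ₁ z : Euc n) - (Φ₂ z : Euc n)‖ ∂μ₀ with hD
  have hDc : Continuous fun z : ↥Zs => (Ll + LF * ‖p z‖) * ‖(Φ₁ z : Euc n) - (Φ₂ z : Euc n)‖ := by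
    have h1 : Continuous fun z : ↥Zs => (Φ₁ z : Euc n) := continuous_subtype_val.comp Φ₁.continuous
    have h2 : Continuous fun z : ↥Zs => (Φ₂ z : Euc n) := continuous_subtype_val.comp Φ₂.continuous
    exact (continuous_const.add (continuous_const.mul p.continuous.norm)).mul (h1.sub h2).norm
  have hDi : Integrable (fun z : ↥Zs => (Ll + LF * ‖p z‖) * ‖(Φ₁ z : Euc n) - (Φ₂ z : Euc n)‖) μ₀ :=
    hDc.integrable_of_hasCompactSupport (HasCompactSupport.of_compactSpace _)
  -- key pointwise difference bound
  have hgd : ∀ u v, |g Φ₁ u v - g Φ₂ u v| ≤ D := by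
    intro u v
    rw [hg, ← integral_sub (hfi Φ₁ u v) (hfi Φ₂ u v), ← Real.norm_eq_abs]
    refine norm_integral_le_of_norm_le hDi (ae_of_all _ fun z => ?_)
    rw [Real.norm_eq_abs]
    have hdiff : f Φ₁ u v z - f Φ₂ u v z =
        (l ((Φ₁ z : Euc n)) u v - l ((Φ₂ z : Euc n)) u v) +
          (inner ℝ (F ((Φ₁ z : Euc n)) u v - F ((Φ₂ z : Euc n)) u v) (p z) : ℝ) := by
      simp [hf, inner_sub_left]; ring
    rw [hdiff]
    calc |_| ≤ |l ((Φ₁ z : Euc n)) u v - l ((Φ₂ z : Euc n)) u v| +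
          |(inner ℝ (F ((Φ₁ z : Euc n)) u v - F ((Φ₂ z : Euc n)) u v) (p z) : ℝ)| := abs_add_le _ _
      _ ≤ Ll * ‖(Φ₁ z : Euc n) - (Φ₂ z : Euc n)‖ +
          (LF * ‖(Φ₁ z : Euc n) - (Φ₂ z : Euc n)‖) * ‖p z‖ := by
          gcongr
          · exact hlL _ _ _ _
          · exact le_trans (abs_real_inner_le_norm _ _)
              (mul_le_mul_of_nonneg_right (hFL _ _ _ _) (norm_nonneg _))
      _ = (Ll + LF * ‖p z‖) * ‖(Φ₁ z : Euc n) - (Φ₂ z : Euc n)‖ := by ring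
  -- inf-sup stability
  have key : ∀ Φa Φb : C(↥Zs, ↥Zs), (∀ u v, g Φa u v - g Φb u v ≤ D) →
      (⨅ u, ⨆ v, g Φa u v) - (⨅ u, ⨆ v, g Φb u v) ≤ D := by
    intro Φa Φb h
    rw [sub_le_comm]
    refine le_ciInf fun u => ?_
    have h1 : (⨅ u, ⨆ v, g Φa u v) ≤ ⨆ v, g Φa u v := ciInf_le (hbddB Φa) u
    have h2 : (⨆ v, g Φa u v) ≤ (⨆ v, g Φb u v) + D :=
      ciSup_le fun v => by
        have := le_ciSup (hbddA Φb u) v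
        have := h u v
        linarith
    linarith
  have hD12 : ∀ u v, g Φ₁ u v - g Φ₂ u v ≤ D := fun u v =>
    le_trans (le_abs_self _) (hgd u v)
  have hD21 : ∀ u v, g Φ₂ u v - g Φ₁ u v ≤ D := fun u v => by
    have := neg_le_of_abs_le (hgd u v); linarith
  rw [abs_sub_le_iff]
  exact ⟨key Φ₁ Φ₂ hD12, key Φ₂ Φ₁ hD21⟩
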